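/- For the test of X ~ N(0,σ²) against the mixture (1/2)N(a,σ²) + (1/2)N(−a,σ²) with a, σ > 0, among all tests T with P₀(T = 1) ≤ 1 − δ, the minimal average type-II error (1/2)P_a(T=0) + (1/2)P_{−a}(T=0) equals Φ(Φ⁻¹((1+δ)/2) + a/σ) − Φ(−Φ⁻¹((1+δ)/2) + a/σ). -/

import Mathlib

open MeasureTheory ProbabilityTheory Real Set

/-- The standard normal CDF. -/
noncomputable def Phi (y : ℝ) : ℝ := ((gaussianReal 0 1) (Set.Iic y)).toReal

/-- The standard normal quantile function (inverse CDF). -/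
noncomputable def PhiInv : ℝ → ℝ := Function.invFun Phi

section NPhelpers
open Filter


lemma NP.gr_toReal (m : ℝ) {v : NNReal} (hv : v ≠ 0) (s : Set ℝ) :
    ((gaussianReal m v) s).toReal = ∫ x in s, gaussianPDFReal m v x := by
  rw [gaussianReal_apply_eq_integral m hv s,
    ENNReal.toReal_ofReal (integral_nonneg fun x => gaussianPDFReal_nonneg m v x)]

lemma NP.Phi_eq (y : ℝ) : Phi y = ∫ x in Iic y, gaussianPDFReal 0 1 x :=
  NP.gr_toReal 0 one_ne_zero _

lemma NP.Phi_strictMono : StrictMono Phi := by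
  intro x y hxy
  have h := intervalIntegral.integral_Iic_sub_Iic
    ((integrable_gaussianPDFReal 0 1).integrableOn (s := Iic x))
    ((integrable_gaussianPDFReal 0 1).integrableOn (s := Iic y))
  rw [← sub_pos, NP.Phi_eq, NP.Phi_eq, h]
  exact intervalIntegral.intervalIntegral_pos_of_pos_on
    ((integrable_gaussianPDFReal 0 1).intervalIntegrable)
    (fun t _ => gaussianPDFReal_pos 0 1 t one_ne_zero) hxy

lemma NP.Phi_continuous : Continuous Phi := by
  have h : Phi = fun y => Phi 0 + ∫ t in (0:ℝ)..y, gaussianPDFReal 0 1 t := by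
    funext y
    rw [← intervalIntegral.integral_Iic_sub_Iic
      ((integrable_gaussianPDFReal 0 1).integrableOn (s := Iic 0))
      ((integrable_gaussianPDFReal 0 1).integrableOn (s := Iic y)), ← NP.Phi_eq, ← NP.Phi_eq]
    ring
  rw [h]
  exact continuous_const.add (intervalIntegral.continuous_primitive
    (fun a b => (integrable_gaussianPDFReal 0 1).intervalIntegrable) 0)

lemma NP.std_map_neg : (gaussianReal 0 1).map (fun x : ℝ => -x) = gaussianReal 0 1 := by
  have h := gaussianReal_map_const_mul (μ := 0) (v := 1) (-1)
  have h2 : (NNReal.mk ((-1:ℝ)^2) (sq_nonneg _) * 1 : NNReal) = 1 := by ext; simp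
  rw [h2, mul_zero] at h
  rw [← h]; congr 1; funext x; ring

lemma NP.Phi_symm (x : ℝ) : Phi (-x) = 1 - Phi x := by
  have hmap := NP.std_map_neg
  have h1 : (gaussianReal 0 1) (Iic (-x)) = (gaussianReal 0 1) (Ici x) := by
    conv_lhs => rw [← hmap]
    rw [Measure.map_apply measurable_neg measurableSet_Iic]
    congr 1
    ext t; simp
  have hsing : (gaussianReal 0 1) {x} = 0 :=
    gaussianReal_absolutelyContinuous 0 one_ne_zero (measure_singleton x)
  have h2 : (gaussianReal 0 1) (Iio x) = (gaussianReal 0 1) (Iic x) :=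
    measure_congr (Iio_ae_eq_Iic' hsing)
  have h3 : (gaussianReal 0 1) (Ici x) = 1 - (gaussianReal 0 1) (Iio x) := by
    rw [← compl_Iio, prob_compl_eq_one_sub measurableSet_Iio]
  rw [Phi, Phi, h1, h3, h2]
  rw [ENNReal.toReal_sub_of_le (prob_le_one) (by simp)]
  simp

lemma NP.Phi_zero : Phi 0 = 1 / 2 := by
  have := NP.Phi_symm 0
  rw [neg_zero] at this
  linarith

lemma NP.Phi_tendsto_atTop : Tendsto Phi atTop (nhds 1) := by
  have h := tendsto_measure_Iic_atTop (gaussianReal 0 1)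
  rw [measure_univ] at h
  have h2 := (ENNReal.tendsto_toReal (a := 1) (by simp)).comp h
  rw [ENNReal.toReal_one] at h2
  exact h2

lemma NP.Phi_tendsto_atBot : Tendsto Phi atBot (nhds 0) := by
  have h : Phi = fun x => 1 - Phi (-x) := by
    funext x; rw [NP.Phi_symm]; ring
  rw [h]
  have : Tendsto (fun x : ℝ => Phi (-x)) atBot (nhds 1) :=
    NP.Phi_tendsto_atTop.comp tendsto_neg_atBot_atTop
  simpa using (tendsto_const_nhds (x := (1:ℝ))).sub this

lemma NP.Phi_invFun {p : ℝ} (h0 : 0 < p) (h1 : p < 1) : Phi (PhiInv p) = p := by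
  refine Function.invFun_eq ?_
  obtain ⟨x, hx⟩ := (NP.Phi_tendsto_atBot.eventually_lt_const h0).exists
  obtain ⟨y, hy⟩ := (NP.Phi_tendsto_atTop.eventually_const_lt h1).exists
  obtain ⟨z, _, hz⟩ := intermediate_value_Icc (le_of_lt (NP.Phi_strictMono.lt_iff_lt.mp
    (hx.trans hy))) NP.Phi_continuous.continuousOn (mem_Icc.mpr ⟨hx.le, hy.le⟩)
  exact ⟨z, hz⟩

lemma NP.v_ne {σ : ℝ} (hσ : 0 < σ) : (σ ^ 2).toNNReal ≠ 0 := by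
  simp [Real.toNNReal_eq_zero, not_le, pow_pos hσ, hσ.ne']

lemma NP.gauss_map {σ : ℝ} (hσ : 0 < σ) (m : ℝ) :
    gaussianReal m (σ ^ 2).toNNReal = (gaussianReal 0 1).map (fun x => σ * x + m) := by
  have h1 : (gaussianReal 0 1).map (fun x => σ * x) = gaussianReal 0 (σ ^ 2).toNNReal := by
    have h := gaussianReal_map_const_mul (μ := 0) (v := 1) σ
    have h2 : (NNReal.mk (σ ^ 2) (sq_nonneg _) * 1 : NNReal) = (σ ^ 2).toNNReal := by
      ext; simp [Real.coe_toNNReal _ (sq_nonneg σ)]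
    rw [h2, mul_zero] at h
    exact h
  have hcomp : (fun x : ℝ => σ * x + m) = (fun x => x + m) ∘ (fun x => σ * x) := rfl
  rw [hcomp, ← Measure.map_map (measurable_add_const m) (measurable_const_mul σ), h1,
    gaussianReal_map_add_const, zero_add]

lemma NP.gauss_Iic {σ : ℝ} (hσ : 0 < σ) (m y : ℝ) :
    ((gaussianReal m (σ ^ 2).toNNReal) (Iic y)).toReal = Phi ((y - m) / σ) := by
  rw [NP.gauss_map hσ m, Measure.map_apply (by fun_prop) measurableSet_Iic]
  congr 2
  ext x
  simp only [mem_preimage, mem_Iic]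
  rw [le_div_iff₀ hσ]
  constructor <;> intro h <;> nlinarith

lemma NP.integral_Iic {σ : ℝ} (hσ : 0 < σ) (m y : ℝ) :
    ∫ x in Iic y, gaussianPDFReal m (σ ^ 2).toNNReal x = Phi ((y - m) / σ) := by
  rw [← NP.gr_toReal m (NP.v_ne hσ), NP.gauss_Iic hσ]

lemma NP.integral_Icc {σ : ℝ} (hσ : 0 < σ) (m u w : ℝ) (huw : u ≤ w) :
    ∫ x in Icc u w, gaussianPDFReal m (σ ^ 2).toNNReal x
      = Phi ((w - m) / σ) - Phi ((u - m) / σ) := by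
  rw [integral_Icc_eq_integral_Ioc, ← intervalIntegral.integral_of_le huw,
    ← intervalIntegral.integral_Iic_sub_Iic
      ((integrable_gaussianPDFReal m _).integrableOn (s := Iic u))
      ((integrable_gaussianPDFReal m _).integrableOn (s := Iic w)),
    NP.integral_Iic hσ, NP.integral_Iic hσ]

lemma NP.density_sum {a σ : ℝ} (hσ : 0 < σ) (x : ℝ) :
    gaussianPDFReal a (σ ^ 2).toNNReal x + gaussianPDFReal (-a) (σ ^ 2).toNNReal x
      = 2 * rexp (-a ^ 2 / (2 * σ ^ 2)) * Real.cosh (a * x / σ ^ 2)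
        * gaussianPDFReal 0 (σ ^ 2).toNNReal x := by
  have hv : ((σ ^ 2).toNNReal : ℝ) = σ ^ 2 := Real.coe_toNNReal _ (sq_nonneg σ)
  have hσ2 : (0:ℝ) < σ ^ 2 := pow_pos hσ 2
  unfold gaussianPDFReal
  rw [hv]
  have key : ∀ m : ℝ, rexp (-(x - m) ^ 2 / (2 * σ ^ 2))
      = rexp (-x ^ 2 / (2 * σ ^ 2)) * rexp (-m ^ 2 / (2 * σ ^ 2)) * rexp (m * x / σ ^ 2) := by
    intro m
    rw [← Real.exp_add, ← Real.exp_add]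
    congr 1
    field_simp
    ring
  rw [key a, key (-a), Real.cosh_eq]
  have h1 : (-a) ^ 2 = a ^ 2 := by ring
  rw [h1]
  have h2 : rexp (-a * x / σ ^ 2) = rexp (-(a * x / σ ^ 2)) := by ring_nf
  rw [h2]
  ring

end NPhelpers

/-- Neyman–Pearson for testing `N(0,σ²)` against the mixture
`(1/2)N(a,σ²) + (1/2)N(−a,σ²)`: among all measurable rejection regions `R` with
`P₀(X ∈ R) ≤ 1 − δ`, the minimal average type-II error equals
`Φ(Φ⁻¹((1+δ)/2) + a/σ) − Φ(−Φ⁻¹((1+δ)/2) + a/σ)`. -/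
theorem neyman_pearson_mixture (a σ δ : ℝ) (ha : 0 < a) (hσ : 0 < σ)
    (hδ0 : 0 < δ) (hδ1 : δ < 1) :
    sInf {e : ℝ | ∃ R : Set ℝ, MeasurableSet R ∧
        ((gaussianReal 0 (σ ^ 2).toNNReal) R).toReal ≤ 1 - δ ∧
        e = (1 / 2) * ((gaussianReal a (σ ^ 2).toNNReal) Rᶜ).toReal
          + (1 / 2) * ((gaussianReal (-a) (σ ^ 2).toNNReal) Rᶜ).toReal}
      = Phi (PhiInv ((1 + δ) / 2) + a / σ) - Phi (-(PhiInv ((1 + δ) / 2)) + a / σ) := by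
  have hv := NP.v_ne hσ
  have hσ2 : (0:ℝ) < σ ^ 2 := pow_pos hσ 2
  set c := PhiInv ((1 + δ) / 2) with hc_def
  have hPhic : Phi c = (1 + δ) / 2 := NP.Phi_invFun (by linarith) (by linarith)
  have hc_pos : 0 < c := by
    by_contra h
    push_neg at h
    have h2 : Phi c ≤ Phi 0 := NP.Phi_strictMono.monotone h
    rw [hPhic, NP.Phi_zero] at h2
    linarith
  have hσc : 0 < σ * c := mul_pos hσ hc_pos
  set A : Set ℝ := Icc (-(σ * c)) (σ * c) with hA_def
  have hAmeas : MeasurableSet A := measurableSet_Icc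
  have hle : -(σ * c) ≤ σ * c := by linarith
  set T : ℝ := Phi (c + a / σ) - Phi (-c + a / σ) with hT_def
  -- integral of the null density over A is δ
  have hI0A : ∫ x in A, gaussianPDFReal 0 (σ ^ 2).toNNReal x = δ := by
    rw [hA_def, NP.integral_Icc hσ 0 _ _ hle]
    have e1 : (σ * c - 0) / σ = c := by field_simp; try ring
    have e2 : (-(σ * c) - 0) / σ = -c := by field_simp; try ring
    rw [e1, e2, NP.Phi_symm, hPhic]
    ring
  -- integrals of the alternative densities over A equal T
  have hIaA : ∫ x in A, gaussianPDFReal a (σ ^ 2).toNNReal x = T := by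
    rw [hA_def, NP.integral_Icc hσ a _ _ hle]
    have e1 : (σ * c - a) / σ = c - a / σ := by field_simp
    have e2 : (-(σ * c) - a) / σ = -(c + a / σ) := by field_simp; ring
    rw [e1, e2]
    have h1 : Phi (c - a / σ) = 1 - Phi (-c + a / σ) := by
      rw [show c - a / σ = -(-c + a / σ) by ring, NP.Phi_symm]
    rw [h1, NP.Phi_symm, hT_def]
    ring
  have hIbA : ∫ x in A, gaussianPDFReal (-a) (σ ^ 2).toNNReal x = T := by
    rw [hA_def, NP.integral_Icc hσ (-a) _ _ hle]
    have e1 : (σ * c - -a) / σ = c + a / σ := by field_simp; ring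
    have e2 : (-(σ * c) - -a) / σ = -c + a / σ := by field_simp; ring
    rw [e1, e2, hT_def]
  -- total mass
  have htot : ∀ m : ℝ, (∫ x in A, gaussianPDFReal m (σ ^ 2).toNNReal x)
      + ∫ x in Aᶜ, gaussianPDFReal m (σ ^ 2).toNNReal x = 1 := by
    intro m
    rw [integral_add_compl hAmeas (integrable_gaussianPDFReal m _)]
    exact integral_gaussianPDFReal_eq_one m hv
  -- the likelihood-ratio threshold
  set k : ℝ := rexp (-a ^ 2 / (2 * σ ^ 2)) * Real.cosh (a * (σ * c) / σ ^ 2) with hk_def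
  have hk : 0 ≤ k := by positivity
  have habs_cosh : ∀ u w : ℝ, |u| ≤ |w| →
      Real.cosh (a * u / σ ^ 2) ≤ Real.cosh (a * w / σ ^ 2) := by
    intro u w h
    rw [Real.cosh_le_cosh, abs_div, abs_div, abs_mul, abs_mul, abs_of_pos ha,
      abs_of_pos hσ2]
    gcongr
  set h : ℝ → ℝ := fun x => (gaussianPDFReal a (σ ^ 2).toNNReal x
      + gaussianPDFReal (-a) (σ ^ 2).toNNReal x) / 2
      - k * gaussianPDFReal 0 (σ ^ 2).toNNReal x with hh_def
  have hhint : Integrable h := by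
    exact (((integrable_gaussianPDFReal a _).add
      (integrable_gaussianPDFReal (-a) _)).div_const 2).sub
      ((integrable_gaussianPDFReal 0 _).const_mul k)
  have hfact : ∀ x : ℝ, h x = rexp (-a ^ 2 / (2 * σ ^ 2))
      * (Real.cosh (a * x / σ ^ 2) - Real.cosh (a * (σ * c) / σ ^ 2))
      * gaussianPDFReal 0 (σ ^ 2).toNNReal x := by
    intro x
    rw [hh_def]
    simp only
    rw [NP.density_sum hσ, hk_def]
    ring
  have hmemA : ∀ x : ℝ, x ∈ A ↔ |x| ≤ σ * c := by
    intro x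
    rw [hA_def, mem_Icc, ← abs_le]
  have hneg : ∀ x ∈ A, h x ≤ 0 := by
    intro x hx
    rw [hfact]
    have hd : Real.cosh (a * x / σ ^ 2) - Real.cosh (a * (σ * c) / σ ^ 2) ≤ 0 := by
      refine sub_nonpos.mpr (habs_cosh x (σ * c) ?_)
      rw [abs_of_pos hσc]
      exact (hmemA x).mp hx
    exact mul_nonpos_of_nonpos_of_nonneg
      (mul_nonpos_of_nonneg_of_nonpos (Real.exp_pos _).le hd)
      (gaussianPDFReal_nonneg _ _ _)
  have hpos : ∀ x ∉ A, 0 ≤ h x := by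
    intro x hx
    rw [hfact]
    have hd : Real.cosh (a * (σ * c) / σ ^ 2) ≤ Real.cosh (a * x / σ ^ 2) := by
      refine habs_cosh (σ * c) x ?_
      rw [abs_of_pos hσc]
      have := (hmemA x).not.mp hx
      push_neg at this
      exact this.le
    exact mul_nonneg (mul_nonneg (Real.exp_pos _).le (by linarith))
      (gaussianPDFReal_nonneg _ _ _)
  have hexp : ∀ S : Set ℝ, ∫ x in S, h x
      = ((∫ x in S, gaussianPDFReal a (σ ^ 2).toNNReal x)
        + ∫ x in S, gaussianPDFReal (-a) (σ ^ 2).toNNReal x) / 2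
        - k * ∫ x in S, gaussianPDFReal 0 (σ ^ 2).toNNReal x := by
    intro S
    have h1 : Integrable (fun x => (gaussianPDFReal a (σ ^ 2).toNNReal x
        + gaussianPDFReal (-a) (σ ^ 2).toNNReal x) / 2) (volume.restrict S) :=
      (((integrable_gaussianPDFReal a _).add
        (integrable_gaussianPDFReal (-a) _)).div_const 2).restrict
    have h2 : Integrable (fun x => k * gaussianPDFReal 0 (σ ^ 2).toNNReal x)
        (volume.restrict S) := ((integrable_gaussianPDFReal 0 _).const_mul k).restrict
    have h3 : Integrable (fun x => gaussianPDFReal a (σ ^ 2).toNNReal x)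
        (volume.restrict S) := (integrable_gaussianPDFReal a _).restrict
    have h4 : Integrable (fun x => gaussianPDFReal (-a) (σ ^ 2).toNNReal x)
        (volume.restrict S) := (integrable_gaussianPDFReal (-a) _).restrict
    rw [hh_def]
    simp only
    rw [integral_sub h1 h2, integral_div, integral_add h3 h4, integral_const_mul]
  -- lower bound for any admissible rejection region
  have hlb : ∀ R : Set ℝ, MeasurableSet R →
      ((gaussianReal 0 (σ ^ 2).toNNReal) R).toReal ≤ 1 - δ →
      T ≤ (1 / 2) * ((gaussianReal a (σ ^ 2).toNNReal) Rᶜ).toReal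
        + (1 / 2) * ((gaussianReal (-a) (σ ^ 2).toNNReal) Rᶜ).toReal := by
    intro R hR hR0
    rw [NP.gr_toReal 0 hv] at hR0
    rw [NP.gr_toReal a hv, NP.gr_toReal (-a) hv]
    have hB : MeasurableSet Rᶜ := hR.compl
    have hIB : δ ≤ ∫ x in Rᶜ, gaussianPDFReal 0 (σ ^ 2).toNNReal x := by
      have := integral_add_compl hR (integrable_gaussianPDFReal 0 (σ ^ 2).toNNReal)
      rw [integral_gaussianPDFReal_eq_one 0 hv] at this
      linarith
    have hptw : ∀ x, A.indicator h x ≤ Rᶜ.indicator h x := by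
      intro x
      by_cases hxA : x ∈ A
      · rw [indicator_of_mem hxA]
        by_cases hxB : x ∈ Rᶜ
        · rw [indicator_of_mem hxB]
        · rw [indicator_of_notMem hxB]; exact hneg x hxA
      · rw [indicator_of_notMem hxA]
        by_cases hxB : x ∈ Rᶜ
        · rw [indicator_of_mem hxB]; exact hpos x hxA
        · rw [indicator_of_notMem hxB]
    have hmono := integral_mono (hhint.indicator hAmeas) (hhint.indicator hB) hptw
    rw [integral_indicator hAmeas, integral_indicator hB] at hmono
    rw [hexp A, hexp Rᶜ, hIaA, hIbA, hI0A] at hmono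
    have hkmul : k * δ ≤ k * ∫ x in Rᶜ, gaussianPDFReal 0 (σ ^ 2).toNNReal x :=
      mul_le_mul_of_nonneg_left hIB hk
    linarith
  -- the optimal region attains T
  have hmem : T ∈ {e : ℝ | ∃ R : Set ℝ, MeasurableSet R ∧
      ((gaussianReal 0 (σ ^ 2).toNNReal) R).toReal ≤ 1 - δ ∧
      e = (1 / 2) * ((gaussianReal a (σ ^ 2).toNNReal) Rᶜ).toReal
        + (1 / 2) * ((gaussianReal (-a) (σ ^ 2).toNNReal) Rᶜ).toReal} := by
    refine ⟨Aᶜ, hAmeas.compl, ?_, ?_⟩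
    · rw [NP.gr_toReal 0 hv]
      have := htot 0
      linarith
    · rw [compl_compl, NP.gr_toReal a hv, NP.gr_toReal (-a) hv, hIaA, hIbA]
      ring
  refine le_antisymm (csInf_le ⟨T, ?_⟩ hmem) (le_csInf ⟨T, hmem⟩ ?_)
  · rintro e ⟨R, hR, hR0, rfl⟩
    exact hlb R hR hR0
  · rintro e ⟨R, hR, hR0, rfl⟩
    exact hlb R hR hR0
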